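/- (Construction of a force-dependent dissipation potential from a contact-equivalent one.) Let X be a finite-dimensional real inner product space and let M : X × X → ℝ ∪ {+∞} satisfy: (i) M(v,ξ) ≥ ⟨ξ,v⟩ for all (v,ξ); (ii) for each ξ the map v ↦ M(v,ξ) is convex and lower semicontinuous; (iii) M(v,ξ) ≥ M(0,ξ) for all (v,ξ); (iv) there exists a superlinear dissipation potential R : X → [0,∞] (i.e. R(v)/‖v‖ → ∞ as ‖v‖ → ∞) such that the contact set {(v,ξ) : M(v,ξ) = ⟨ξ,v⟩} equals the graph of the convex subdifferential ∂R. Then for each ξ ∈ X: M(0,ξ) is finite; the function R̄_ξ(v) := M(v,ξ) − M(0,ξ) is a dissipation potential; its Fenchel conjugate satisfies (R̄_ξ)*(ξ) = M(0,ξ); and M(v,ξ) = R̄_ξ(v) + (R̄_ξ)*(ξ) for all v ∈ X. -/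

import Mathlib

open scoped ENNReal RealInnerProductSpace


private lemma aux_ennreal_coe_toReal {x : ℝ≥0∞} (h : x ≠ ⊤) :
    (x : EReal) = ((x.toReal : ℝ) : EReal) := by
  induction x with
  | top => simp at h
  | coe y => rw [ENNReal.coe_toReal]; rfl

private lemma aux_abs_coe {x : EReal} (hx : 0 ≤ x) : ((x.abs : ℝ≥0∞) : EReal) = x := by
  induction x with
  | bot => exact absurd hx (by simp)
  | top => simp
  | coe y =>
      rw [EReal.coe_abs, abs_of_nonneg (by exact_mod_cast hx)]

private lemma aux_add_sub_cancel (r : ℝ) {x : EReal} (hx : x ≠ ⊥) :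
    (r : EReal) + (x - (r : EReal)) = x := by
  induction x with
  | bot => exact absurd rfl hx
  | top => rw [EReal.top_sub_coe]; simp
  | coe y => rw [← EReal.coe_sub, ← EReal.coe_add]; norm_num

private lemma aux_sub_add_cancel (r : ℝ) {x : EReal} (hx : x ≠ ⊥) :
    (x - (r : EReal)) + (r : EReal) = x := by
  rw [add_comm]; exact aux_add_sub_cancel r hx

private lemma aux_sub_nonneg {x : EReal} {r : ℝ} (h : (r : EReal) ≤ x) :
    0 ≤ x - (r : EReal) := by
  induction x with
  | bot => exact absurd h (by simp)
  | top => rw [EReal.top_sub_coe]; exact le_top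
  | coe y =>
      rw [← EReal.coe_sub]
      exact_mod_cast sub_nonneg.2 (by exact_mod_cast h)

private lemma aux_sub_lt_zero {a : ℝ} {b : EReal} (h : (a : EReal) < b) :
    (a : EReal) - b < 0 := by
  induction b with
  | bot => exact absurd h (by simp)
  | top => simp
  | coe y =>
      rw [← EReal.coe_sub]
      exact_mod_cast sub_neg.2 (by exact_mod_cast h)

private lemma aux_sub_ne_bot {x : EReal} (hx : x ≠ ⊥) (r : ℝ) : x - (r : EReal) ≠ ⊥ := by
  induction x with
  | bot => exact absurd rfl hx
  | top => rw [EReal.top_sub_coe]; simp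
  | coe y => rw [← EReal.coe_sub]; exact EReal.coe_ne_bot _

private lemma aux_mul_ne_bot {s : ℝ} (hs : 0 ≤ s) {z : EReal} (hz : z ≠ ⊥) :
    (s : EReal) * z ≠ ⊥ := by
  rcases eq_or_lt_of_le hs with h | h
  · rw [← h]; simp
  · induction z with
    | bot => exact absurd rfl hz
    | top => rw [EReal.coe_mul_top_of_pos h]; simp
    | coe y => rw [← EReal.coe_mul]; exact EReal.coe_ne_bot _

private lemma aux_combo (t s r : ℝ) {x y : EReal} (ht : 0 ≤ t) (hs : 0 ≤ s)
    (hts : t + s = 1) (hx : x ≠ ⊥) (hy : y ≠ ⊥) :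
    (t : EReal) * x + (s : EReal) * y - (r : EReal)
      = (t : EReal) * (x - r) + (s : EReal) * (y - r) := by
  rcases eq_or_lt_of_le ht with h0t | h0t
  · have hs1 : s = 1 := by linarith
    rw [← h0t, hs1]; simp [aux_add_sub_cancel, hx, hy]
  rcases eq_or_lt_of_le hs with h0s | h0s
  · have ht1 : t = 1 := by linarith
    rw [← h0s, ht1]; simp [aux_add_sub_cancel, hx, hy]
  induction x with
  | bot => exact absurd rfl hx
  | top =>
      rw [EReal.coe_mul_top_of_pos h0t, EReal.top_sub_coe, EReal.coe_mul_top_of_pos h0t,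
        EReal.top_add_of_ne_bot (aux_mul_ne_bot hs hy),
        EReal.top_add_of_ne_bot (aux_mul_ne_bot hs (aux_sub_ne_bot hy r)), EReal.top_sub_coe]
  | coe a =>
      induction y with
      | bot => exact absurd rfl hy
      | top =>
          rw [EReal.coe_mul_top_of_pos h0s, EReal.top_sub_coe, EReal.coe_mul_top_of_pos h0s]
          rw [add_comm ((t:EReal) * (a:EReal)) ⊤, add_comm _ ⊤,
            EReal.top_add_of_ne_bot (aux_mul_ne_bot ht (EReal.coe_ne_bot a)), EReal.top_sub_coe,
            EReal.top_add_of_ne_bot (aux_mul_ne_bot ht (aux_sub_ne_bot (EReal.coe_ne_bot a) r))]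
      | coe b =>
          rw [← EReal.coe_sub, ← EReal.coe_sub, ← EReal.coe_mul, ← EReal.coe_mul,
            ← EReal.coe_mul, ← EReal.coe_mul, ← EReal.coe_add, ← EReal.coe_add,
            ← EReal.coe_sub, EReal.coe_eq_coe_iff]
          linear_combination r * hts

private lemma aux_usc_max {X : Type*} [TopologicalSpace X] {f : X → EReal}
    (hf : UpperSemicontinuous f) {K : Set X} (hK : IsCompact K) (hne : K.Nonempty) :
    ∃ x ∈ K, ∀ y ∈ K, f y ≤ f x := by
  by_contra h
  push_neg at h
  set S : EReal := ⨆ y ∈ K, f y with hS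
  have hlt : ∀ x ∈ K, f x < S := by
    intro x hx
    obtain ⟨y, hy, hxy⟩ := h x hx
    exact lt_of_lt_of_le hxy (le_biSup f hy)
  have hc : ∀ x : K, ∃ c : EReal, f x < c ∧ c < S := fun x => exists_between (hlt x x.2)
  choose c hc1 hc2 using hc
  have hopen : ∀ x : K, IsOpen (f ⁻¹' Set.Iio (c x)) :=
    fun x => upperSemicontinuous_iff_isOpen_preimage.1 hf (c x)
  have hcover : K ⊆ ⋃ x : K, f ⁻¹' Set.Iio (c x) := by
    intro x hx
    exact Set.mem_iUnion.2 ⟨⟨x, hx⟩, hc1 ⟨x, hx⟩⟩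
  obtain ⟨t, ht⟩ := hK.elim_finite_subcover _ hopen hcover
  obtain ⟨x0, hx0⟩ := hne
  have htne : t.Nonempty := by
    obtain ⟨i, hi⟩ := Set.mem_iUnion₂.1 (ht hx0)
    exact ⟨i, hi.1⟩
  have hSle : S ≤ t.sup' htne c := by
    rw [hS]
    refine iSup₂_le fun y hy => ?_
    obtain ⟨i, hi, hyi⟩ := Set.mem_iUnion₂.1 (ht hy)
    exact le_of_lt (lt_of_lt_of_le hyi (Finset.le_sup' c hi))
  have hsup_lt : t.sup' htne c < S := (Finset.sup'_lt_iff htne).2 fun i _ => hc2 i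
  exact absurd (lt_of_le_of_lt hSle hsup_lt) (lt_irrefl _)

private lemma aux_exists_real {x : EReal} {c : ℝ} (h1 : (0 : EReal) ≤ x)
    (h2 : x ≤ (c : EReal)) : ∃ r : ℝ, x = (r : EReal) ∧ 0 ≤ r := by
  induction x with
  | bot => exact absurd h1 (by simp)
  | top => exact absurd h2 (by simp)
  | coe y => exact ⟨y, rfl, by exact_mod_cast h1⟩

/-- **Force-dependent dissipation potential from a contact-equivalent one.**
Let `M : X × X → ℝ ∪ {+∞}` (realized as an `EReal`-valued map) satisfy the Fenchel-Young
lower bound `M(v,ξ) ≥ ⟨ξ,v⟩`, be convex and lower semicontinuous in `v`, satisfy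
`M(v,ξ) ≥ M(0,ξ)`, and suppose its contact set is the graph of the subdifferential of a
superlinear dissipation potential `R`. Then for each `ξ`, `M(0,ξ)` is finite, the map
`v ↦ M(v,ξ) - M(0,ξ)` is a dissipation potential `R̄_ξ` with Fenchel conjugate satisfying
`(R̄_ξ)*(ξ) = M(0,ξ)`, and `M(v,ξ) = R̄_ξ(v) + (R̄_ξ)*(ξ)` for all `v`. -/
theorem statement7 {X : Type*} [NormedAddCommGroup X] [InnerProductSpace ℝ X]
    [FiniteDimensional ℝ X] (M : X → X → EReal)
    (hM_young : ∀ v ξ : X, ((⟪ξ, v⟫ : ℝ) : EReal) ≤ M v ξ)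
    (hM_conv : ∀ ξ x y : X, ∀ t : ℝ, 0 ≤ t → t ≤ 1 →
      M (t • x + (1 - t) • y) ξ ≤ ((t : ℝ) : EReal) * M x ξ + (((1 - t) : ℝ) : EReal) * M y ξ)
    (hM_lsc : ∀ ξ : X, LowerSemicontinuous fun v => M v ξ)
    (hM_mono : ∀ v ξ : X, M 0 ξ ≤ M v ξ)
    (R : X → ℝ≥0∞)
    (hR_conv : ∀ x y : X, ∀ t : ℝ, 0 ≤ t → t ≤ 1 →
      R (t • x + (1 - t) • y) ≤ ENNReal.ofReal t * R x + ENNReal.ofReal (1 - t) * R y)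
    (hR_lsc : LowerSemicontinuous R) (hR0 : R 0 = 0)
    (hR_superlinear : Filter.Tendsto (fun v : X => R v / ENNReal.ofReal ‖v‖)
      (Filter.comap norm Filter.atTop) (nhds ⊤))
    (hcontact : ∀ v ξ : X, M v ξ = ((⟪ξ, v⟫ : ℝ) : EReal) ↔
      (R v ≠ ⊤ ∧ ∀ w : X, (R v : EReal) + ((⟪ξ, w - v⟫ : ℝ) : EReal) ≤ (R w : EReal))) :
    ∀ ξ : X, (∃ r : ℝ, M 0 ξ = (r : EReal)) ∧
      ∃ Rb : X → ℝ≥0∞,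
        (∀ x y : X, ∀ t : ℝ, 0 ≤ t → t ≤ 1 →
          Rb (t • x + (1 - t) • y) ≤ ENNReal.ofReal t * Rb x + ENNReal.ofReal (1 - t) * Rb y) ∧
        LowerSemicontinuous Rb ∧ Rb 0 = 0 ∧
        (∀ v : X, (Rb v : EReal) = M v ξ - M 0 ξ) ∧
        (((⨆ w : X, ENNReal.ofReal ⟪ξ, w⟫ - Rb w : ℝ≥0∞) : EReal) = M 0 ξ) ∧
        (∀ v : X, M v ξ =
          (Rb v : EReal) + ((⨆ w : X, ENNReal.ofReal ⟪ξ, w⟫ - Rb w : ℝ≥0∞) : EReal)) := by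
  intro ξ
  -- the function to maximize
  set f : X → EReal := fun v => ((⟪ξ, v⟫ : ℝ) : EReal) - (R v : EReal) with hf_def
  -- upper semicontinuity of f
  have hg_cont : Continuous fun v : X => ((⟪ξ, v⟫ : ℝ) : EReal) :=
    continuous_coe_real_ereal.comp (continuous_const.inner continuous_id)
  have hR_lsc' : LowerSemicontinuous fun v : X => (R v : EReal) :=
    continuous_coe_ennreal_ereal.comp_lowerSemicontinuous hR_lsc
      (fun a b h => EReal.coe_ennreal_le_coe_ennreal_iff.2 h)
  have hnegR_usc : UpperSemicontinuous fun v : X => -(R v : EReal) :=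
    continuous_neg.comp_lowerSemicontinuous_antitone hR_lsc'
      (fun a b h => EReal.neg_le_neg_iff.2 h)
  have husc : UpperSemicontinuous f := by
    have := (hg_cont.upperSemicontinuous).add' hnegR_usc (fun x =>
      EReal.continuousAt_add (Or.inl (EReal.coe_ne_top _)) (Or.inl (EReal.coe_ne_bot _)))
    simpa [hf_def, sub_eq_add_neg] using this
  -- the set where f ≥ 0 is closed
  have hKclosed : IsClosed {v : X | 0 ≤ f v} := by
    have : {v : X | 0 ≤ f v} = (f ⁻¹' Set.Iio 0)ᶜ := by
      ext v; simp [not_lt]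
    rw [this]
    exact (upperSemicontinuous_iff_isOpen_preimage.1 husc 0).isClosed_compl
  -- superlinearity gives a bound
  have hev : ∀ᶠ v in Filter.comap norm Filter.atTop,
      ENNReal.ofReal (‖ξ‖ + 1) < R v / ENNReal.ofReal ‖v‖ :=
    hR_superlinear.eventually (lt_mem_nhds ENNReal.ofReal_lt_top)
  obtain ⟨B, hB⟩ := Filter.eventually_atTop.1 (Filter.eventually_comap.1 hev)
  have hbound : ∀ v : X, max B 1 ≤ ‖v‖ → f v < 0 := by
    intro v hv
    have hv1 : (1 : ℝ) ≤ ‖v‖ := le_trans (le_max_right _ _) hv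
    have hdiv := hB ‖v‖ (le_trans (le_max_left _ _) hv) v rfl
    have hmul : ENNReal.ofReal ((‖ξ‖ + 1) * ‖v‖) < R v := by
      rw [ENNReal.ofReal_mul (by positivity)]
      exact ENNReal.mul_lt_of_lt_div hdiv
    have hlt : ((⟪ξ, v⟫ : ℝ) : EReal) < (R v : EReal) := by
      have h1 : (⟪ξ, v⟫ : ℝ) < (‖ξ‖ + 1) * ‖v‖ := by
        have := real_inner_le_norm ξ v
        nlinarith
      calc ((⟪ξ, v⟫ : ℝ) : EReal) < (((‖ξ‖ + 1) * ‖v‖ : ℝ) : EReal) := by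
            exact_mod_cast h1
        _ = ((ENNReal.ofReal ((‖ξ‖ + 1) * ‖v‖) : ℝ≥0∞) : EReal) := by
            rw [EReal.coe_ennreal_ofReal, max_eq_left (by positivity)]
        _ < (R v : EReal) := EReal.coe_ennreal_lt_coe_ennreal_iff.2 hmul
    exact aux_sub_lt_zero hlt
  -- compactness
  have hKsub : {v : X | 0 ≤ f v} ⊆ Metric.closedBall 0 (max B 1) := by
    intro v hv
    rw [mem_closedBall_zero_iff]
    by_contra hc
    push_neg at hc
    exact absurd (lt_of_le_of_lt hv (hbound v hc.le)) (lt_irrefl _)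
  have hKcompact : IsCompact {v : X | 0 ≤ f v} :=
    (isCompact_closedBall 0 (max B 1)).of_isClosed_subset hKclosed hKsub
  have hf0 : f 0 = 0 := by
    simp [hf_def, hR0, inner_zero_right]
  have hKne : ({v : X | 0 ≤ f v}).Nonempty := ⟨0, by simp [hf0]⟩
  -- maximizer
  obtain ⟨v₀, hv₀K, hv₀max⟩ := aux_usc_max husc hKcompact hKne
  have hv₀0 : (0 : EReal) ≤ f v₀ := hv₀K
  have hglobal : ∀ w : X, f w ≤ f v₀ := by
    intro w
    by_cases hw : 0 ≤ f w
    · exact hv₀max w hw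
    · exact le_trans (le_of_not_ge hw) hv₀0
  -- R v₀ is finite
  have hRv₀top : R v₀ ≠ ⊤ := by
    intro h
    rw [hf_def] at hv₀0
    simp only [h] at hv₀0
    simp at hv₀0
  -- subgradient property
  have hsubgrad : ∀ w : X, (R v₀ : EReal) + ((⟪ξ, w - v₀⟫ : ℝ) : EReal) ≤ (R w : EReal) := by
    intro w
    by_cases hw : R w = ⊤
    · rw [hw]; exact le_top
    have h1 : ((⟪ξ, w⟫ : ℝ) : EReal) - (R w : EReal)
        ≤ ((⟪ξ, v₀⟫ : ℝ) : EReal) - (R v₀ : EReal) := hglobal w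
    rw [aux_ennreal_coe_toReal hRv₀top, aux_ennreal_coe_toReal hw, ← EReal.coe_sub,
      ← EReal.coe_sub, EReal.coe_le_coe_iff] at h1
    rw [aux_ennreal_coe_toReal hRv₀top, aux_ennreal_coe_toReal hw, ← EReal.coe_add,
      EReal.coe_le_coe_iff, inner_sub_right]
    linarith
  have hMv₀ : M v₀ ξ = ((⟪ξ, v₀⟫ : ℝ) : EReal) := (hcontact v₀ ξ).2 ⟨hRv₀top, hsubgrad⟩
  -- M 0 ξ is a nonnegative real
  have h0le : (0 : EReal) ≤ M 0 ξ := by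
    have := hM_young 0 ξ
    simpa [inner_zero_right] using this
  have hle : M 0 ξ ≤ ((⟪ξ, v₀⟫ : ℝ) : EReal) := hMv₀ ▸ hM_mono v₀ ξ
  obtain ⟨r, hr, hr0⟩ : ∃ r : ℝ, M 0 ξ = (r : EReal) ∧ 0 ≤ r :=
    aux_exists_real h0le hle
  have hrv₀ : r ≤ ⟪ξ, v₀⟫ := by
    rw [hr] at hle; exact_mod_cast hle
  refine ⟨⟨r, hr⟩, ?_⟩
  -- basic facts about M · ξ
  have hMne_bot : ∀ v : X, M v ξ ≠ ⊥ :=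
    fun v => ((EReal.bot_lt_coe _).trans_le (hM_young v ξ)).ne'
  have hM0le : ∀ v : X, (0 : EReal) ≤ M v ξ := fun v => le_trans h0le (hM_mono v ξ)
  have hMrle : ∀ v : X, (r : EReal) ≤ M v ξ := fun v => hr ▸ hM_mono v ξ
  -- definition of Rb
  set Rb : X → ℝ≥0∞ := fun v => (M v ξ - (r : EReal)).abs with hRb_def
  have hRbE : ∀ v : X, ((Rb v : ℝ≥0∞) : EReal) = M v ξ - (r : EReal) :=
    fun v => aux_abs_coe (aux_sub_nonneg (hMrle v))
  refine ⟨Rb, ?_, ?_, ?_, ?_, ?_, ?_⟩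
  · -- convexity
    intro x y t ht ht1
    rw [← EReal.coe_ennreal_le_coe_ennreal_iff, EReal.coe_ennreal_add,
      EReal.coe_ennreal_mul, EReal.coe_ennreal_mul, hRbE, hRbE, hRbE,
      EReal.coe_ennreal_ofReal, EReal.coe_ennreal_ofReal,
      max_eq_left ht, max_eq_left (by linarith : (0:ℝ) ≤ 1 - t)]
    calc M (t • x + (1 - t) • y) ξ - (r : EReal)
        ≤ ((t : ℝ) : EReal) * M x ξ + (((1 - t) : ℝ) : EReal) * M y ξ - (r : EReal) :=
          EReal.sub_le_sub (hM_conv ξ x y t ht ht1) (le_refl _)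
      _ = (t : EReal) * (M x ξ - r) + ((1 - t : ℝ) : EReal) * (M y ξ - r) :=
          aux_combo t (1 - t) r ht (by linarith) (by ring) (hMne_bot x) (hMne_bot y)
  · -- lower semicontinuity
    intro x c hc
    have hcne : c ≠ ⊤ := hc.ne_top
    have hc' : ((c.toReal + r : ℝ) : EReal) < M x ξ := by
      have h1 : (c : EReal) < ((Rb x : ℝ≥0∞) : EReal) :=
        EReal.coe_ennreal_lt_coe_ennreal_iff.2 hc
      rw [hRbE, aux_ennreal_coe_toReal hcne] at h1
      rw [EReal.coe_add]
      exact (EReal.lt_sub_iff_add_lt (Or.inl (EReal.coe_ne_bot _))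
        (Or.inl (EReal.coe_ne_top _))).1 h1
    filter_upwards [hM_lsc ξ x _ hc'] with y hy
    show c < Rb y
    rw [← EReal.coe_ennreal_lt_coe_ennreal_iff, hRbE, aux_ennreal_coe_toReal hcne]
    rw [EReal.coe_add] at hy
    exact (EReal.lt_sub_iff_add_lt (Or.inl (EReal.coe_ne_bot _))
      (Or.inl (EReal.coe_ne_top _))).2 hy
  · -- Rb 0 = 0
    rw [hRb_def]
    simp only
    rw [hr, ← EReal.coe_sub, sub_self]
    exact EReal.abs_zero
  · -- identification
    intro v
    rw [hRbE, hr]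
  · -- conjugate value
    have hSup : (⨆ w : X, ENNReal.ofReal ⟪ξ, w⟫ - Rb w) = ENNReal.ofReal r := by
      apply le_antisymm
      · refine iSup_le fun w => ?_
        rw [tsub_le_iff_right]
        rw [← EReal.coe_ennreal_le_coe_ennreal_iff, EReal.coe_ennreal_add, hRbE,
          EReal.coe_ennreal_ofReal, EReal.coe_ennreal_ofReal, max_eq_left hr0,
          aux_add_sub_cancel r (hMne_bot w)]
        rcases le_total (⟪ξ, w⟫ : ℝ) 0 with h | h
        · rw [max_eq_right h]; exact hM0le w
        · rw [max_eq_left h]; exact hM_young w ξ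
      · have hRbv₀ : Rb v₀ = ENNReal.ofReal (⟪ξ, v₀⟫ - r) := by
          apply EReal.coe_ennreal_injective
          rw [hRbE, hMv₀, EReal.coe_ennreal_ofReal, max_eq_left (by linarith), EReal.coe_sub]
        have : ENNReal.ofReal r = ENNReal.ofReal ⟪ξ, v₀⟫ - Rb v₀ := by
          rw [hRbv₀, ← ENNReal.ofReal_sub _ (by linarith : (0:ℝ) ≤ ⟪ξ, v₀⟫ - r)]
          norm_num
        rw [this]
        exact le_iSup (fun w => ENNReal.ofReal ⟪ξ, w⟫ - Rb w) v₀
    rw [hSup, EReal.coe_ennreal_ofReal, max_eq_left hr0, hr]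
  · -- the decomposition
    intro v
    have hSup : (⨆ w : X, ENNReal.ofReal ⟪ξ, w⟫ - Rb w) = ENNReal.ofReal r := by
      apply le_antisymm
      · refine iSup_le fun w => ?_
        rw [tsub_le_iff_right]
        rw [← EReal.coe_ennreal_le_coe_ennreal_iff, EReal.coe_ennreal_add, hRbE,
          EReal.coe_ennreal_ofReal, EReal.coe_ennreal_ofReal, max_eq_left hr0,
          aux_add_sub_cancel r (hMne_bot w)]
        rcases le_total (⟪ξ, w⟫ : ℝ) 0 with h | h
        · rw [max_eq_right h]; exact hM0le w
        · rw [max_eq_left h]; exact hM_young w ξ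
      · have hRbv₀ : Rb v₀ = ENNReal.ofReal (⟪ξ, v₀⟫ - r) := by
          apply EReal.coe_ennreal_injective
          rw [hRbE, hMv₀, EReal.coe_ennreal_ofReal, max_eq_left (by linarith), EReal.coe_sub]
        have : ENNReal.ofReal r = ENNReal.ofReal ⟪ξ, v₀⟫ - Rb v₀ := by
          rw [hRbv₀, ← ENNReal.ofReal_sub _ (by linarith : (0:ℝ) ≤ ⟪ξ, v₀⟫ - r)]
          norm_num
        rw [this]
        exact le_iSup (fun w => ENNReal.ofReal ⟪ξ, w⟫ - Rb w) v₀
    rw [hSup, hRbE, EReal.coe_ennreal_ofReal, max_eq_left hr0,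
      aux_sub_add_cancel r (hMne_bot v)]
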